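/- Let φ_k(u,z) be defined recursively by φ_0(u,z) = z and φ_{k+1}(u,z) = (u+z)² z ∂φ_k/∂z. Then φ_k(u,z) is a polynomial of the form Σ_{j=1}^{2k+1} c_j^{(k)} u^{2k+1−j} z^j with rational constants c_j^{(k)}, and the leading coefficient is c_{2k+1}^{(k)} = (2k−1)!! (with the convention (−1)!! = 1). -/

import Mathlib

open Polynomial

/-- The derivation `D = (u+z)² z d/dz` on `ℚ[u][z]`, where `u = C X` and `z = X`. -/
noncomputable def Dop (p : Polynomial (Polynomial ℚ)) : Polynomial (Polynomial ℚ) :=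
  (C (X : Polynomial ℚ) + X) ^ 2 * X * derivative p

/-- `φ_k(u,z)`, defined by `φ_0 = z` and `φ_{k+1} = (u+z)² z ∂φ_k/∂z`, i.e. `φ_k = D^k(z)`. -/
noncomputable def phi (k : ℕ) : Polynomial (Polynomial ℚ) :=
  Dop^[k] X

lemma Dop_eq (p : Polynomial (Polynomial ℚ)) :
    Dop p = C ((X:Polynomial ℚ)^2) * (derivative p * X^1)
      + (C (X:Polynomial ℚ) * (derivative p * X^2) + C (X:Polynomial ℚ) * (derivative p * X^2))
      + derivative p * X^3 := by
  unfold Dop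
  simp only [map_pow]
  ring

lemma coeff_coeff_Dop (p : Polynomial (Polynomial ℚ)) (j m : ℕ) :
    ((Dop p).coeff j).coeff m =
      (if 1 ≤ j ∧ 2 ≤ m then (j:ℚ) * ((p.coeff j).coeff (m-2)) else 0)
    + (if 2 ≤ j ∧ 1 ≤ m then 2*((j-1:ℕ):ℚ) * ((p.coeff (j-1)).coeff (m-1)) else 0)
    + (if 3 ≤ j then ((j-2:ℕ):ℚ) * ((p.coeff (j-2)).coeff m) else 0) := by
  rw [Dop_eq]
  simp only [coeff_add, coeff_C_mul, coeff_mul_X_pow',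
    apply_ite (fun q : Polynomial ℚ => ((X:Polynomial ℚ)^2 * q)),
    apply_ite (fun q : Polynomial ℚ => ((X:Polynomial ℚ) * q)),
    mul_zero, coeff_zero, coeff_derivative]
  rw [show ∀ a : Polynomial ℚ, (X^2 * a) = a * X^2 from fun a => mul_comm _ _,
    show ∀ a : Polynomial ℚ, (X * a) = a * X^1 from fun a => by ring]
  simp only [apply_ite (fun q : Polynomial ℚ => q.coeff m), coeff_zero, coeff_mul_X_pow',
    ← C_eq_natCast, ← C_1, ← C_add, coeff_mul_C]
  split_ifs <;>
    try simp_all [Nat.sub_add_cancel, mul_comm]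
  all_goals try omega
  all_goals (try rw [show j - 2 + 1 = j - 1 by omega]) <;>
    (try rw [show j - 3 + 1 = j - 2 by omega]) <;> push_cast <;> try ring
  all_goals obtain rfl : j = 1 := by omega
  all_goals simp

lemma phi_succ (k : ℕ) : phi (k+1) = Dop (phi k) := by
  unfold phi
  rw [Function.iterate_succ_apply']

lemma phi_hom (k : ℕ) : ∀ j m : ℕ, j + m ≠ 2*k+1 → ((phi k).coeff j).coeff m = 0 := by
  induction k with
  | zero =>
    intro j m h
    rcases eq_or_ne j 1 with rfl | hj
    · rw [show (phi 0) = X from rfl, coeff_X_one]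
      rw [coeff_one]
      simp only [if_neg (by omega : ¬ m = 0)]
    · rw [show (phi 0) = X from rfl, coeff_X, if_neg (fun h' => hj h'.symm)]
      simp
  | succ k ih =>
    intro j m h
    rw [phi_succ, coeff_coeff_Dop]
    rw [show ∀ a b c : ℚ, a = 0 → b = 0 → c = 0 → a + b + c = 0 from
      by intros a b c ha hb hc; rw [ha, hb, hc]; ring]
    · split_ifs with h1
      · rw [ih j (m-2) (by omega), mul_zero]
      · rfl
    · split_ifs with h1
      · rw [ih (j-1) (m-1) (by omega), mul_zero]
      · rfl
    · split_ifs with h1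
      · rw [ih (j-2) m (by omega), mul_zero]
      · rfl

lemma df_odd (k : ℕ) :
    (Nat.doubleFactorial (2*k+1) : ℚ) = (2*k+1) * (Nat.doubleFactorial (2*k-1) : ℚ) := by
  cases k with
  | zero => simp [Nat.doubleFactorial]
  | succ k =>
    rw [show 2*(k+1)+1 = (2*k+1)+2 by ring, show 2*(k+1)-1 = 2*k+1 by omega,
      Nat.doubleFactorial]
    push_cast
    ring

lemma phi_lead (k : ℕ) :
    ((phi k).coeff (2*k+1)).coeff 0 = (Nat.doubleFactorial (2*k-1) : ℚ) := by
  induction k with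
  | zero => simp [show (phi 0) = X from rfl, coeff_X_one, Nat.doubleFactorial]
  | succ k ih =>
    rw [phi_succ, show 2*(k+1)+1 = (2*k+1)+2 by ring, coeff_coeff_Dop]
    rw [if_neg (by omega), if_neg (by omega), if_pos (by omega)]
    rw [show 2*k+1+2-2 = 2*k+1 by omega, ih]
    rw [show 2*(k+1)-1 = 2*k+1 by omega, df_odd]
    push_cast
    ring

lemma phi_coeff_zero (k : ℕ) : (phi k).coeff 0 = 0 := by
  cases k with
  | zero => simp [show (phi 0) = X from rfl]
  | succ k =>
    ext m
    rw [phi_succ, coeff_coeff_Dop, if_neg (by omega), if_neg (by omega), if_neg (by omega)]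
    simp

theorem stmt13 (k : ℕ) :
    ∃ c : ℕ → ℚ,
      (phi k = ∑ j ∈ Finset.Icc 1 (2 * k + 1),
          C (C (c j) * (X : Polynomial ℚ) ^ (2 * k + 1 - j)) * X ^ j) ∧
      c (2 * k + 1) = (Nat.doubleFactorial (2 * k - 1) : ℚ) := by
  refine ⟨fun j => ((phi k).coeff j).coeff (2*k+1-j), ?_, ?_⟩
  · apply Polynomial.ext
    intro i
    rw [finset_sum_coeff]
    have hterm : ∀ j ∈ Finset.Icc 1 (2*k+1),
        (C (C (((phi k).coeff j).coeff (2*k+1-j)) * (X:Polynomial ℚ) ^ (2*k+1-j)) * X ^ j).coeff i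
        = if j = i then C (((phi k).coeff j).coeff (2*k+1-j)) * (X:Polynomial ℚ) ^ (2*k+1-j)
          else 0 := by
      intro j _
      rw [coeff_C_mul, coeff_X_pow]
      rcases eq_or_ne j i with rfl | h
      · rw [if_pos rfl, if_pos rfl, mul_one]
      · rw [if_neg (fun hh => h hh.symm), if_neg h, mul_zero]
    rw [Finset.sum_congr rfl hterm, Finset.sum_ite_eq' (Finset.Icc 1 (2*k+1))]
    by_cases hi : i ∈ Finset.Icc 1 (2*k+1)
    · rw [if_pos hi]
      simp only [Finset.mem_Icc] at hi
      apply Polynomial.ext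
      intro m
      rw [coeff_C_mul, coeff_X_pow]
      rcases eq_or_ne m (2*k+1-i) with rfl | hm
      · simp
      · rw [if_neg hm, mul_zero, phi_hom k i m (by omega)]
    · rw [if_neg hi]
      simp only [Finset.mem_Icc] at hi
      rcases Nat.eq_zero_or_pos i with rfl | hpos
      · exact phi_coeff_zero k
      · apply Polynomial.ext
        intro m
        rw [phi_hom k i m (by omega), coeff_zero]
  · simp only [Nat.sub_self]
    exact phi_lead k
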